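/- In the ring of formal power series ℚ[[z]], the generating function E(z) = Σ_{n≥1} e_n·z^n satisfies the Riccati-type differential equation (1−z)²·z·E′(z) = (1−z)²·E(z)² + (1−z²)·E(z) + z², where E′ denotes the formal derivative. -/

import Mathlib

/-- Plane binary trees: a leaf, or an ordered pair of plane binary trees. -/
inductive PTree : Type where
  | leaf : PTree
  | node : PTree → PTree → PTree
deriving DecidableEq

namespace PTree

/-- Number of leaves of a plane binary tree. -/
def leaves : PTree → ℕ
  | leaf => 1
  | node l r => leaves l + leaves r

/-- Number of root ancestral configurations:
`c(leaf) = 0`, `c(node l r) = (c l + 1) * (c r + 1)`. -/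
def c : PTree → ℕ
  | leaf => 0
  | node l r => (c l + 1) * (c r + 1)

/-- The finite set of plane binary trees with `n` leaves. -/
def trees : ℕ → Finset PTree
  | 0 => ∅
  | 1 => {leaf}
  | (n+2) =>
      (Finset.Icc 1 (n+1)).attach.biUnion fun j =>
        ((trees j.1) ×ˢ (trees (n+2-j.1))).image fun p => node p.1 p.2
decreasing_by
  · have h := Finset.mem_Icc.mp j.2; omega
  · have h := Finset.mem_Icc.mp j.2; omega

end PTree

namespace PTree

/-- Yule–Harding weight: `w(leaf) = 1`,
`w(node l r) = w l * w r / (leaves l + leaves r - 1)`. -/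
def w : PTree → ℚ
  | leaf => 1
  | node l r => w l * w r / ((leaves l + leaves r - 1 : ℕ) : ℚ)

end PTree

namespace PTree

/-- Yule–Harding mean number of root configurations (`e 0 = 0` since `trees 0 = ∅`). -/
def e (n : ℕ) : ℚ := ∑ t ∈ trees n, w t * (c t : ℚ)

end PTree
namespace PTree
lemma leaves_of_mem : ∀ (t : PTree) (n : ℕ), t ∈ trees n → t.leaves = n := by
  intro t
  induction t with
  | leaf =>
      intro n hn
      match n with
      | 0 => simp [trees] at hn
      | 1 => simp [leaves]
      | (m+2) =>
          rw [trees] at hn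
          simp only [Finset.mem_biUnion, Finset.mem_image, Finset.mem_product] at hn
          obtain ⟨j, _, p, _, hp⟩ := hn
          exact absurd hp (by simp)
  | node l r ihl ihr =>
      intro n hn
      match n with
      | 0 => simp [trees] at hn
      | 1 =>
          rw [trees] at hn
          simp at hn
      | (m+2) =>
          rw [trees] at hn
          simp only [Finset.mem_biUnion, Finset.mem_image, Finset.mem_product] at hn
          obtain ⟨j, _, p, ⟨hp1, hp2⟩, hp⟩ := hn
          injection hp with h1 h2
          subst h1; subst h2
          have hj := Finset.mem_Icc.mp j.2
          have e1 := ihl _ hp1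
          have e2 := ihr _ hp2
          simp [leaves, e1, e2]
          omega

lemma sum_trees (n : ℕ) (f : PTree → ℚ) :
    ∑ t ∈ trees (n+2), f t
      = ∑ j ∈ Finset.Icc 1 (n+1), ∑ l ∈ trees j, ∑ r ∈ trees (n+2-j), f (node l r) := by
  rw [trees]
  rw [Finset.sum_biUnion]
  · rw [← Finset.sum_attach (Finset.Icc 1 (n+1))
      (fun j => ∑ l ∈ trees j, ∑ r ∈ trees (n+2-j), f (node l r))]
    refine Finset.sum_congr rfl fun j _ => ?_
    rw [Finset.sum_image, Finset.sum_product]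
    intro p hp q hq hpq
    injection hpq with h1 h2
    exact Prod.ext h1 h2
  · intro a _ b _ hab
    refine Finset.disjoint_left.mpr fun t hta htb => ?_
    simp only [Finset.mem_image, Finset.mem_product] at hta htb
    obtain ⟨p, ⟨hp1, _⟩, rfl⟩ := hta
    obtain ⟨q, ⟨hq1, _⟩, hq⟩ := htb
    injection hq with h1 h2
    rw [h1] at hq1
    exact hab (Subtype.ext ((leaves_of_mem _ _ hp1).symm.trans (leaves_of_mem _ _ hq1)))

lemma w_node_mem {m j : ℕ} (hj : j ∈ Finset.Icc 1 (m+1)) {l r : PTree}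
    (hl : l ∈ trees j) (hr : r ∈ trees (m+2-j)) :
    w (node l r) = w l * w r / ((m+1 : ℕ) : ℚ) := by
  have hj' := Finset.mem_Icc.mp hj
  have h1 := leaves_of_mem _ _ hl
  have h2 := leaves_of_mem _ _ hr
  rw [w, h1, h2]
  congr 2
  omega

lemma sum_w : ∀ n : ℕ, ∑ t ∈ trees (n+1), w t = 1 := by
  intro n
  induction n using Nat.strong_induction_on with
  | _ n ih =>
    match n with
    | 0 => simp [trees, w]
    | (m+1) =>
      rw [show m+1+1 = m+2 from rfl, sum_trees]
      have key : ∀ j ∈ Finset.Icc 1 (m+1),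
          ∑ l ∈ trees j, ∑ r ∈ trees (m+2-j), w (node l r) = 1 / ((m+1 : ℕ) : ℚ) := by
        intro j hj
        have hj' := Finset.mem_Icc.mp hj
        have hsl : ∑ l ∈ trees j, w l = 1 := by
          obtain ⟨k, rfl⟩ : ∃ k, j = k + 1 := ⟨j - 1, by omega⟩
          exact ih k (by omega)
        have hsr : ∑ r ∈ trees (m+2-j), w r = 1 := by
          obtain ⟨k, hk⟩ : ∃ k, m+2-j = k + 1 := ⟨m+1-j, by omega⟩
          rw [hk]; exact ih k (by omega)
        calc ∑ l ∈ trees j, ∑ r ∈ trees (m+2-j), w (node l r)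
            = ∑ l ∈ trees j, ∑ r ∈ trees (m+2-j), w l * w r / ((m+1 : ℕ) : ℚ) := by
              refine Finset.sum_congr rfl fun l hl => Finset.sum_congr rfl fun r hr => ?_
              exact w_node_mem hj hl hr
          _ = (∑ l ∈ trees j, w l) * (∑ r ∈ trees (m+2-j), w r) / ((m+1:ℕ) : ℚ) := by
              rw [Finset.sum_mul_sum]
              rw [Finset.sum_div]
              refine Finset.sum_congr rfl fun l hl => ?_
              rw [Finset.sum_div]
          _ = 1 / ((m+1:ℕ):ℚ) := by rw [hsl, hsr, one_mul]
      rw [Finset.sum_congr rfl key, Finset.sum_const, Nat.card_Icc]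
      have : ((m+1 : ℕ) : ℚ) ≠ 0 := by positivity
      rw [show m + 1 + 1 - 1 = m + 1 from rfl, nsmul_eq_mul]
      field_simp

lemma sum_wc (n : ℕ) : ∑ t ∈ trees (n+1), w t * ((c t : ℚ) + 1) = e (n+1) + 1 := by
  have h : ∀ t : PTree, w t * ((c t : ℚ) + 1) = w t * (c t : ℚ) + w t := fun t => by ring
  simp_rw [h, Finset.sum_add_distrib, sum_w n, e]

lemma e_rec (m : ℕ) : ((m+1 : ℕ) : ℚ) * e (m+2) =
    ∑ j ∈ Finset.Icc 1 (m+1), (e j + 1) * (e (m+2-j) + 1) := by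
  rw [e, sum_trees]
  rw [Finset.mul_sum]
  refine Finset.sum_congr rfl fun j hj => ?_
  have hj' := Finset.mem_Icc.mp hj
  have hm : ((m+1:ℕ):ℚ) ≠ 0 := by positivity
  have h1 : ∑ l ∈ trees j, w l * ((c l : ℚ) + 1) = e j + 1 := by
    obtain ⟨k, rfl⟩ : ∃ k, j = k + 1 := ⟨j - 1, by omega⟩
    exact sum_wc k
  have h2 : ∑ r ∈ trees (m+2-j), w r * ((c r : ℚ) + 1) = e (m+2-j) + 1 := by
    obtain ⟨k, hk⟩ : ∃ k, m+2-j = k + 1 := ⟨m+1-j, by omega⟩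
    rw [hk]; exact sum_wc k
  calc ((m+1:ℕ):ℚ) * ∑ l ∈ trees j, ∑ r ∈ trees (m+2-j), w (node l r) * (c (node l r) : ℚ)
      = ∑ l ∈ trees j, ∑ r ∈ trees (m+2-j), (w l * ((c l:ℚ)+1)) * (w r * ((c r:ℚ)+1)) := by
        rw [Finset.mul_sum]
        refine Finset.sum_congr rfl fun l hl => ?_
        rw [Finset.mul_sum]
        refine Finset.sum_congr rfl fun r hr => ?_
        rw [w_node_mem hj hl hr, c]
        push_cast
        field_simp
    _ = (∑ l ∈ trees j, w l * ((c l:ℚ)+1)) * (∑ r ∈ trees (m+2-j), w r * ((c r:ℚ)+1)) := by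
        rw [Finset.sum_mul_sum]
    _ = (e j + 1) * (e (m+2-j) + 1) := by rw [h1, h2]
lemma e_zero : e 0 = 0 := by simp [e, trees]

lemma e_one : e 1 = 0 := by simp [e, trees, w, c]

/-- Convolution of `e` with itself. -/
noncomputable def Aq (n : ℕ) : ℚ := ∑ p ∈ Finset.HasAntidiagonal.antidiagonal n, e p.1 * e p.2

/-- Partial sums of `e`. -/
noncomputable def Tq (n : ℕ) : ℚ := ∑ j ∈ Finset.Icc 1 n, e j

lemma Aq_eq (k : ℕ) : Aq (k+2) = ∑ j ∈ Finset.Icc 1 (k+1), e j * e (k+2-j) := by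
  rw [Aq, Finset.Nat.sum_antidiagonal_eq_sum_range_succ (fun i j => e i * e j)]
  rw [Finset.sum_range_succ, Finset.sum_range_succ']
  simp only [e_zero, zero_mul, mul_zero, add_zero, Nat.sub_self]
  refine Finset.sum_nbij' (fun x => x+1) (fun j => j-1)
    (fun a ha => ?_) (fun a ha => ?_) (fun a ha => ?_) (fun a ha => ?_) (fun a ha => ?_) <;>
    beta_reduce <;> simp only [Finset.mem_range, Finset.mem_Icc] at *
  all_goals first | omega | (congr 2 <;> omega)

lemma reflect_sum (k : ℕ) : ∑ j ∈ Finset.Icc 1 (k+1), e (k+2-j) = Tq (k+1) := by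
  rw [Tq]
  refine Finset.sum_nbij' (fun j => k+2-j) (fun j => k+2-j) ?_ ?_ ?_ ?_ ?_ <;>
    intro a ha <;> simp only [Finset.mem_Icc] at * <;> omega

lemma L (n : ℕ) : (n : ℚ) * e (n+1) = Aq (n+1) + 2 * Tq n + n := by
  match n with
  | 0 =>
      simp [Tq, Aq, e_zero, e_one, Finset.Nat.antidiagonal_succ]
  | (k+1) =>
      have h := e_rec k
      push_cast at h
      push_cast
      rw [show k+1+1 = k+2 from rfl, h]
      have expand : ∀ j ∈ Finset.Icc 1 (k+1),
          (e j + 1) * (e (k+2-j) + 1) = e j * e (k+2-j) + e j + e (k+2-j) + 1 := by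
        intro j _; ring
      rw [Finset.sum_congr rfl expand]
      simp only [Finset.sum_add_distrib, Finset.sum_const, Nat.card_Icc]
      rw [← Aq_eq, reflect_sum]
      rw [Tq]
      push_cast
      ring

lemma e_two : e 2 = 1 := by
  have := L 1
  simp [Aq, Tq, e_one, e_zero, Finset.Nat.antidiagonal_succ] at this
  linarith [this]

lemma Tq_succ (m : ℕ) : Tq (m+1) = Tq m + e (m+1) := by
  rw [Tq, Tq, Finset.sum_Icc_succ_top (by omega : 1 ≤ m+1)]

end PTree

open PowerSeries

/-- In `ℚ[[z]]`, the generating function `E(z) = Σ_{n≥1} e_n z^n` satisfies the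
Riccati-type equation `(1−z)²·z·E′(z) = (1−z)²·E(z)² + (1−z²)·E(z) + z²`. -/
theorem E_riccati :
    (1 - (X : ℚ⟦X⟧)) ^ 2 * X * d⁄dX ℚ (PowerSeries.mk PTree.e) =
      (1 - (X : ℚ⟦X⟧)) ^ 2 * (PowerSeries.mk PTree.e) ^ 2
        + (1 - (X : ℚ⟦X⟧) ^ 2) * PowerSeries.mk PTree.e + (X : ℚ⟦X⟧) ^ 2 := by
  set S := PowerSeries.mk PTree.e with hS
  set D := d⁄dX ℚ S with hDdef
  have hD : ∀ n, coeff n D = ((n:ℚ)+1) * PTree.e (n+1) := by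
    intro n
    rw [hDdef, coeff_derivative, coeff_mk]
    ring
  have hS2 : ∀ n, coeff n (S^2) = PTree.Aq n := by
    intro n
    rw [pow_two, coeff_mul, PTree.Aq]
    simp [hS, coeff_mk]
  have expandL : (1 - (X : ℚ⟦X⟧)) ^ 2 * X * D
      = X^1*D - X^2*D - X^2*D + X^3*D := by ring
  have expandR : (1 - (X : ℚ⟦X⟧)) ^ 2 * S ^ 2 + (1 - (X : ℚ⟦X⟧) ^ 2) * S + (X : ℚ⟦X⟧) ^ 2
      = S^2 - X^1*S^2 - X^1*S^2 + X^2*S^2 + S - X^2*S + X^2 := by ring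
  rw [expandL, expandR]
  ext n
  simp only [map_add, map_sub, coeff_X_pow_mul', hD, hS2, coeff_X_pow]
  simp only [coeff_mk, hS]
  match n with
  | 0 =>
      norm_num [PTree.e_zero, PTree.Aq, PTree.e_one]
  | 1 =>
      norm_num [PTree.e_zero, PTree.e_one, PTree.Aq, Finset.Nat.antidiagonal_succ]
  | 2 =>
      norm_num [PTree.e_zero, PTree.e_one, PTree.e_two, PTree.Aq,
        Finset.Nat.antidiagonal_succ]
  | (m+3) =>
      have c1 : (1:ℕ) ≤ m+3 := by omega
      have c2 : (2:ℕ) ≤ m+3 := by omega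
      have c3 : (3:ℕ) ≤ m+3 := by omega
      rw [if_pos c1, if_pos c2, if_pos c3, if_neg (by omega : ¬ (m+3 = 2))]
      have h1 : m+3-1 = m+2 := by omega
      have h2 : m+3-2 = m+1 := by omega
      have h3 : m+3-3 = m := by omega
      rw [h1, h2, h3]
      have l1 := PTree.L (m+2)
      have l2 := PTree.L (m+1)
      have l3 := PTree.L m
      have t1 := PTree.Tq_succ (m+1)
      have t2 := PTree.Tq_succ m
      push_cast at l1 l2 l3 ⊢
      linear_combination l1 - 2*l2 + l3 + 2*t1 - 2*t2
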